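/- Assume s̄ ≠ 0, val(P(s̄)) ∈ ℝ, ν is lower semi-continuous at s̄, and Sol(D(s̄)) ≠ ∅. Then Sol(D(s̄)) is unbounded, and moreover −s̄ ∈ [Sol(D(s̄))]^∞, i.e., −s̄ lies in the recession cone of the closed convex set Sol(D(s̄)); in particular λ̄ − t s̄ ∈ Sol(D(s̄)) for every λ̄ ∈ Sol(D(s̄)) and every t ≥ 0. -/

import Mathlib

open Set Filter Topology Bornology Metric
open scoped RealInnerProductSpace

noncomputable section

variable {E : Type*} [NormedAddCommGroup E] [InnerProductSpace ℝ E]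
variable {Y : Type*} [NormedAddCommGroup Y] [InnerProductSpace ℝ Y]

/-- The set of feasible shifts `S = {s | ∃ x, g x + s ∈ K}`. -/
def feasShifts (g : E → Y) (K : Set Y) : Set Y := {s | ∃ x, g x + s ∈ K}

/-- The graph of the set-valued mapping `G_K(x) = -g(x) + K`,
i.e. `{(x, y) | g x + y ∈ K}`. -/
def gphGK (g : E → Y) (K : Set Y) : Set (E × Y) := {p | g p.1 + p.2 ∈ K}

/-- Recession cone of a convex set. -/
def recCone {Z : Type*} [AddCommGroup Z] [Module ℝ Z] (C : Set Z) : Set Z :=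
  {d | ∀ z ∈ C, ∀ t : ℝ, 0 ≤ t → z + t • d ∈ C}

/-- Horizon (recession) function of a finite-valued function `f`. -/
def horizonFn (f : E → ℝ) (h : E) : EReal :=
  ⨆ t : {t : ℝ // 0 < t}, (((f ((t : ℝ) • h) - f 0) / (t : ℝ) : ℝ) : EReal)

/-- The optimal value function `ν(s) = inf {f x : g x + s ∈ K}` of the shifted problem. -/
def valFn (f : E → ℝ) (g : E → Y) (K : Set Y) (s : Y) : EReal :=
  sInf ((fun x => (f x : EReal)) '' {x | g x + s ∈ K})

/-- The solution set `X(s)` of the shifted problem. -/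
def solSet (f : E → ℝ) (g : E → Y) (K : Set Y) (s : Y) : Set E :=
  {x | g x + s ∈ K ∧ ∀ x', g x' + s ∈ K → f x ≤ f x'}

/-- The Lagrangian `l(x,y,λ) = f x + ⟨λ, g x - y⟩`. -/
def lagr (f : E → ℝ) (g : E → Y) (x : E) (y : Y) (l : Y) : ℝ :=
  f x + ⟪l, g x - y⟫

/-- The augmented Lagrangian `l_r(x,y,λ) = f x + ⟨λ, g x - y⟩ + (r/2)‖g x - y‖²`. -/
def auglagr (f : E → ℝ) (g : E → Y) (r : ℝ) (x : E) (y : Y) (l : Y) : ℝ :=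
  f x + ⟪l, g x - y⟫ + r / 2 * ‖g x - y‖ ^ 2

/-- The dual function `θ(λ) = - inf {l(x,y,λ) : x ∈ ℝⁿ, y ∈ K}`. -/
def dualFn (f : E → ℝ) (g : E → Y) (K : Set Y) (l : Y) : EReal :=
  - sInf ((fun p : E × Y => ((lagr f g p.1 p.2 l : ℝ) : EReal)) '' {p | p.2 ∈ K})

/-- Fenchel conjugate of an extended-real-valued function. -/
def econj (h : Y → EReal) (l : Y) : EReal := ⨆ s : Y, (⟪l, s⟫ : EReal) - h s

/-- Convex subdifferential of an extended-real-valued function. -/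
def esubdiff (h : Y → EReal) (s : Y) : Set Y :=
  {l | ∀ s', h s + (⟪l, s' - s⟫ : EReal) ≤ h s'}

/-- Convexity of an extended-real-valued function, via its epigraph. -/
def ERealConvexOn (h : Y → EReal) : Prop :=
  Convex ℝ {p : Y × ℝ | h p.1 ≤ (p.2 : EReal)}

/-- Properness of an extended-real-valued function. -/
def ERealProper (h : Y → EReal) : Prop := (∀ s, h s ≠ ⊥) ∧ ∃ s, h s ≠ ⊤

/-- The optimal value `val(D(s)) = sup_λ [⟨s,λ⟩ - θ(λ)]` of the dual problem `D(s)`. -/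
def dualVal (f : E → ℝ) (g : E → Y) (K : Set Y) (s : Y) : EReal :=
  ⨆ l : Y, (⟪s, l⟫ : EReal) - dualFn f g K l

/-- The solution set `Sol(D(s))` of the dual problem `D(s)`. -/
def dualSol (f : E → ℝ) (g : E → Y) (K : Set Y) (s : Y) : Set Y :=
  {l | ∀ l', (⟪s, l'⟫ : EReal) - dualFn f g K l' ≤ (⟪s, l⟫ : EReal) - dualFn f g K l}

/-- The set of proximal points `argmin_{λ'} [h(λ') + ‖λ' - λ‖²/(2r)]`. -/
def proxSet (h : Y → EReal) (r : ℝ) (l : Y) : Set Y :=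
  {m | ∀ m', h m + ((‖m - l‖ ^ 2 / (2 * r) : ℝ) : EReal) ≤
      h m' + ((‖m' - l‖ ^ 2 / (2 * r) : ℝ) : EReal)}

/-- The Moreau–Yosida regularization `h_r(λ) = inf_{λ'} [h(λ') + ‖λ' - λ‖²/(2r)]`. -/
def moreau (h : Y → EReal) (r : ℝ) (l : Y) : EReal :=
  ⨅ m : Y, (h m + ((‖m - l‖ ^ 2 / (2 * r) : ℝ) : EReal))

lemma EReal.sub_shift (r c : ℝ) (x : EReal) :
    (r : EReal) - x = ((r - c : ℝ) : EReal) - (x - (c : EReal)) := by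
  induction x using EReal.rec with
  | bot =>
      rw [show (⊥ : EReal) - (c : EReal) = ⊥ from rfl]
      rfl
  | coe y =>
      simp only [← EReal.coe_sub]
      congr 1
      ring
  | top =>
      rw [show (⊤ : EReal) - (c : EReal) = ⊤ from rfl]
      rfl

/-- Proposition 4.2: under the standing assumptions, `Sol(D(s̄))` is
unbounded and `-s̄ ∈ [Sol(D(s̄))]^∞`; in particular `λ̄ - t s̄ ∈ Sol(D(s̄))` for every
`λ̄ ∈ Sol(D(s̄))` and `t ≥ 0`. -/
theorem dualSol_unbounded {n : ℕ} {Y : Type*} [NormedAddCommGroup Y]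
    [InnerProductSpace ℝ Y] [FiniteDimensional ℝ Y]
    (f : EuclideanSpace ℝ (Fin n) → ℝ) (g : EuclideanSpace ℝ (Fin n) → Y) (K : Set Y)
    (hfconv : ConvexOn ℝ Set.univ f)
    (hKne : K.Nonempty) (hKclosed : IsClosed K) (hKconv : Convex ℝ K)
    (hgraph : Convex ℝ (gphGK g K))
    (hSclosed : IsClosed (feasShifts g K))
    (sbar : Y) (hsbarS : sbar ∈ feasShifts g K)
    (hsbarmin : ∀ s ∈ feasShifts g K, ‖sbar‖ ≤ ‖s‖)
    (hsbarne : sbar ≠ 0)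
    (hval : ∃ v : ℝ, valFn f g K sbar = (v : EReal))
    (hlsc : LowerSemicontinuousAt (valFn f g K) sbar)
    (hSolne : (dualSol f g K sbar).Nonempty) :
    ¬ Bornology.IsBounded (dualSol f g K sbar) ∧
    -sbar ∈ recCone (dualSol f g K sbar) ∧
    ∀ lbar ∈ dualSol f g K sbar, ∀ t : ℝ, 0 ≤ t → lbar - t • sbar ∈ dualSol f g K sbar := by
  classical
  -- S is convex
  have hSconv : Convex ℝ (feasShifts g K) := by
    have hEq : feasShifts g K =
        (LinearMap.snd ℝ (EuclideanSpace ℝ (Fin n)) Y) '' gphGK g K := by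
      ext s
      constructor
      · rintro ⟨x, hx⟩; exact ⟨(x, s), hx, rfl⟩
      · rintro ⟨⟨x, s'⟩, hp, rfl⟩; exact ⟨x, hp⟩
    rw [hEq]
    exact hgraph.linear_image _
  -- projection inequality: ⟪sbar, s⟫ ≥ ‖sbar‖² for all s ∈ S
  have hproj : ∀ s ∈ feasShifts g K, ‖sbar‖ ^ 2 ≤ ⟪sbar, s⟫ := by
    haveI : Nonempty ↑(feasShifts g K) := ⟨⟨sbar, hsbarS⟩⟩
    have hnorm : ‖(0 : Y) - sbar‖ = ⨅ w : feasShifts g K, ‖(0 : Y) - w‖ := by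
      apply le_antisymm
      · apply le_ciInf
        intro w
        simpa using hsbarmin w w.2
      · exact ciInf_le ⟨0, by rintro x ⟨w, rfl⟩; exact norm_nonneg _⟩
          (⟨sbar, hsbarS⟩ : feasShifts g K)
    have h := (norm_eq_iInf_iff_real_inner_le_zero hSconv hsbarS).mp hnorm
    intro s hs
    have h2 := h s hs
    rw [zero_sub, inner_neg_left, inner_sub_right,
      real_inner_self_eq_norm_sq] at h2
    linarith
  -- key monotonicity: moving in direction -sbar improves the dual objective
  have key : ∀ (l : Y) (t : ℝ), 0 ≤ t →
      (⟪sbar, l⟫ : EReal) - dualFn f g K l ≤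
      (⟪sbar, l - t • sbar⟫ : EReal) - dualFn f g K (l - t • sbar) := by
    intro l t ht
    set c : ℝ := t * ‖sbar‖ ^ 2 with hc
    set A : Y → Set EReal := fun m =>
      (fun p : EuclideanSpace ℝ (Fin n) × Y => ((lagr f g p.1 p.2 m : ℝ) : EReal)) ''
        {p | p.2 ∈ K} with hA
    have hIadd : sInf (A l) + (c : EReal) ≤ sInf (A (l - t • sbar)) := by
      apply le_sInf
      rintro b ⟨p, hp, rfl⟩
      have hmem : (p.2 - g p.1) ∈ feasShifts g K := by
        refine ⟨p.1, ?_⟩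
        rw [show g p.1 + (p.2 - g p.1) = p.2 from by abel]
        exact hp
      have hinner := hproj _ hmem
      have hreal : lagr f g p.1 p.2 l + c ≤ lagr f g p.1 p.2 (l - t • sbar) := by
        unfold lagr
        have hexp : ⟪l - t • sbar, g p.1 - p.2⟫ =
            ⟪l, g p.1 - p.2⟫ + t * ⟪sbar, p.2 - g p.1⟫ := by
          rw [inner_sub_left, real_inner_smul_left]
          have hflip : ⟪sbar, p.2 - g p.1⟫ = -⟪sbar, g p.1 - p.2⟫ := by
            rw [← inner_neg_right, neg_sub]
          rw [hflip]; ring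
        rw [hexp, hc]
        nlinarith
      have h1 : sInf (A l) ≤ ((lagr f g p.1 p.2 l : ℝ) : EReal) :=
        sInf_le ⟨p, hp, rfl⟩
      calc sInf (A l) + (c : EReal)
          ≤ ((lagr f g p.1 p.2 l : ℝ) : EReal) + (c : EReal) :=
            add_le_add_left h1 _
        _ = ((lagr f g p.1 p.2 l + c : ℝ) : EReal) := by rw [EReal.coe_add]
        _ ≤ ((lagr f g p.1 p.2 (l - t • sbar) : ℝ) : EReal) := by
            exact_mod_cast hreal
    have hdual1 : dualFn f g K l = - sInf (A l) := rfl
    have hdual2 : dualFn f g K (l - t • sbar) = - sInf (A (l - t • sbar)) := rfl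
    have hinner2 : (⟪sbar, l - t • sbar⟫ : ℝ) = ⟪sbar, l⟫ - c := by
      rw [inner_sub_right, real_inner_smul_right, real_inner_self_eq_norm_sq, hc]
    rw [hdual1, hdual2, hinner2]
    have hneg : - sInf (A (l - t • sbar)) ≤ - sInf (A l) - (c : EReal) := by
      have hn := EReal.neg_le_neg_iff.mpr hIadd
      rwa [EReal.neg_add (Or.inr (by simp)) (Or.inr (by simp))] at hn
    calc (⟪sbar, l⟫ : EReal) - (- sInf (A l))
        = ((⟪sbar, l⟫ - c : ℝ) : EReal) - ((- sInf (A l)) - (c : EReal)) :=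
          EReal.sub_shift _ _ _
      _ ≤ ((⟪sbar, l⟫ - c : ℝ) : EReal) - (- sInf (A (l - t • sbar))) :=
          EReal.sub_le_sub le_rfl hneg
  -- third claim
  have h3 : ∀ lbar ∈ dualSol f g K sbar, ∀ t : ℝ, 0 ≤ t →
      lbar - t • sbar ∈ dualSol f g K sbar := by
    intro lbar hlbar t ht l'
    exact le_trans (hlbar l') (key lbar t ht)
  refine ⟨?_, ?_, h3⟩
  · -- unboundedness
    intro hb
    rw [isBounded_iff_forall_norm_le] at hb
    obtain ⟨R, hR⟩ := hb
    obtain ⟨l0, hl0⟩ := hSolne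
    have hsnorm : 0 < ‖sbar‖ := norm_pos_iff.mpr hsbarne
    set t : ℝ := (R + ‖l0‖ + 1) / ‖sbar‖ with htdef
    have hRnn : 0 ≤ R := le_trans (norm_nonneg l0) (hR l0 hl0)
    have ht : 0 ≤ t := div_nonneg (by positivity) hsnorm.le
    have hmem := h3 l0 hl0 t ht
    have hle := hR _ hmem
    have hge : ‖t • sbar‖ - ‖l0‖ ≤ ‖l0 - t • sbar‖ := by
      rw [norm_sub_rev]
      exact norm_sub_norm_le _ _
    rw [norm_smul, Real.norm_eq_abs, abs_of_nonneg ht] at hge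
    have htmul : t * ‖sbar‖ = R + ‖l0‖ + 1 := div_mul_cancel₀ _ hsnorm.ne'
    rw [htmul] at hge
    linarith
  · -- recession cone membership
    intro z hz t ht
    have hz2 := h3 z hz t ht
    rwa [smul_neg, ← sub_eq_add_neg]
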